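/- Let π be a Dyck path and Mesa(π) the tall Schröder path obtained by replacing each tall peak ES of π (a peak whose E step does not begin on the diagonal) by a diagonal step D. Then Area(π) = Area(Mesa(π)) ∪ Diag(Mesa(π)), and the only indifference graph γ with Diag(Mesa(π)) ⊆ E(γ) ⊆ Area(π) is γ = Graph(π) itself. -/

import Mathlib

open scoped Classical

/-- A step of a Schröder path: east `E = (1,0)`, south `S = (0,-1)`, diagonal `D = (1,-1)`. -/
inductive Step : Type
  | E | S | D
  deriving DecidableEq

/-- Number of steps moving east (i.e. `E` or `D` steps). -/
def cntX (l : List Step) : ℕ := l.countP (fun s => decide (s ≠ Step.S))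

/-- Number of steps moving south (i.e. `S` or `D` steps). -/
def cntY (l : List Step) : ℕ := l.countP (fun s => decide (s ≠ Step.E))

/-- A Schröder path of size `n`: a path from `(0,0)` to `(n,-n)` with steps `E`, `S`, `D`
never going below the diagonal `y = -x`. -/
def IsSchroeder (n : ℕ) (σ : List Step) : Prop :=
  cntX σ = n ∧ cntY σ = n ∧ ∀ m, cntY (σ.take m) ≤ cntX (σ.take m)

/-- A tall Schröder path: a Schröder path none of whose `D` steps starts on the diagonal. -/
def IsTallSchroeder (n : ℕ) (σ : List Step) : Prop :=
  IsSchroeder n σ ∧ ∀ l₁ l₂ : List Step, σ = l₁ ++ Step.D :: l₂ → cntY l₁ < cntX l₁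

/-- The unit square labelled `{i,j}` (one-based, `i < j`) lies completely below `σ`. -/
def AreaPred (σ : List Step) (i j : ℕ) : Prop :=
  ∃ m, j ≤ cntX (σ.take m) ∧ cntY (σ.take m) < i

/-- The path `σ` has a diagonal step through the unit square labelled `{i,j}`. -/
def DiagPred (σ : List Step) (i j : ℕ) : Prop :=
  ∃ l₁ l₂ : List Step, σ = l₁ ++ Step.D :: l₂ ∧ cntX l₁ + 1 = j ∧ cntY l₁ + 1 = i

/-- `Area(σ)` as a set of edges on `Fin n` (vertex `v` has label `v + 1`). -/
noncomputable def AreaF (n : ℕ) (σ : List Step) : Finset (Sym2 (Fin n)) :=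
  Finset.univ.filter fun e => ∃ i j : Fin n, e = s(i, j) ∧ (i : ℕ) < (j : ℕ) ∧
    AreaPred σ ((i : ℕ) + 1) ((j : ℕ) + 1)

/-- `Diag(σ)` as a set of edges on `Fin n` (vertex `v` has label `v + 1`). -/
noncomputable def DiagF (n : ℕ) (σ : List Step) : Finset (Sym2 (Fin n)) :=
  Finset.univ.filter fun e => ∃ i j : Fin n, e = s(i, j) ∧ (i : ℕ) < (j : ℕ) ∧
    DiagPred σ ((i : ℕ) + 1) ((j : ℕ) + 1)

/-- The edge set of an indifference graph on `[n]`: loopless, and for every edge `{i,l}`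
with `i < l`, every `{j,k}` with `i ≤ j < k ≤ l` is also an edge. -/
def IndiffEdges (n : ℕ) (E : Finset (Sym2 (Fin n))) : Prop :=
  (∀ e ∈ E, ¬ e.IsDiag) ∧
  ∀ i l j k : Fin n, i < l → s(i, l) ∈ E → i ≤ j → j < k → k ≤ l → s(j, k) ∈ E

/-- `mesa h σ`: replace every tall peak `ES` of the path `σ` by a diagonal step `D`,
where `h` is the height `#E - #S` of the starting point above the diagonal (a peak is
tall precisely when its `E` step starts strictly above the diagonal, i.e. `0 < h`). -/
def mesa : ℕ → List Step → List Step
  | h, Step.E :: Step.S :: rest =>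
      if 0 < h then Step.D :: mesa h rest else Step.E :: mesa (h + 1) (Step.S :: rest)
  | h, Step.E :: rest => Step.E :: mesa (h + 1) rest
  | h, Step.S :: rest => Step.S :: mesa (h - 1) rest
  | h, Step.D :: rest => Step.D :: mesa h rest
  | _, [] => []
  termination_by _ l => l.length

@[simp] lemma cntX_nil : cntX [] = 0 := rfl
@[simp] lemma cntY_nil : cntY [] = 0 := rfl
@[simp] lemma cntX_E (l) : cntX (Step.E :: l) = cntX l + 1 := by simp [cntX, List.countP_cons]
@[simp] lemma cntX_S (l) : cntX (Step.S :: l) = cntX l := by simp [cntX, List.countP_cons]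
@[simp] lemma cntX_D (l) : cntX (Step.D :: l) = cntX l + 1 := by simp [cntX, List.countP_cons]
@[simp] lemma cntY_E (l) : cntY (Step.E :: l) = cntY l := by simp [cntY, List.countP_cons]
@[simp] lemma cntY_S (l) : cntY (Step.S :: l) = cntY l + 1 := by simp [cntY, List.countP_cons]
@[simp] lemma cntY_D (l) : cntY (Step.D :: l) = cntY l + 1 := by simp [cntY, List.countP_cons]
@[simp] lemma cntX_append (l₁ l₂) : cntX (l₁ ++ l₂) = cntX l₁ + cntX l₂ := by
  simp [cntX, List.countP_append]
@[simp] lemma cntY_append (l₁ l₂) : cntY (l₁ ++ l₂) = cntY l₁ + cntY l₂ := by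
  simp [cntY, List.countP_append]

lemma cntX_take_le (l : List Step) (m : ℕ) : cntX (l.take m) ≤ cntX l :=
  (List.take_sublist m l).countP_le
lemma cntY_take_le (l : List Step) (m : ℕ) : cntY (l.take m) ≤ cntY l :=
  (List.take_sublist m l).countP_le

lemma mesa_ES (h r) : mesa h (Step.E :: Step.S :: r)
    = if 0 < h then Step.D :: mesa h r else Step.E :: mesa (h + 1) (Step.S :: r) := by
  rw [mesa]

lemma mesa_E (h r) (hr : ∀ r', r = Step.S :: r' → False) :
    mesa h (Step.E :: r) = Step.E :: mesa (h + 1) r := by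
  rw [mesa] <;> try exact hr

lemma mesa_S (h r) : mesa h (Step.S :: r) = Step.S :: mesa (h - 1) r := by rw [mesa]
lemma mesa_nil (h) : mesa h [] = [] := by rw [mesa]

lemma mesa_cnt (h l) : cntX (mesa h l) = cntX l ∧ cntY (mesa h l) = cntY l := by
  induction h, l using mesa.induct with
  | case1 h rest hpos ih => rw [mesa_ES, if_pos hpos]; simp; omega
  | case2 h rest hpos ih => rw [mesa_ES, if_neg hpos]; simp at ih ⊢; omega
  | case3 h rest hne ih => rw [mesa_E _ _ hne]; simp; omega
  | case4 h rest ih => rw [mesa_S]; simp; omega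
  | case5 h rest ih => rw [show mesa h (Step.D :: rest) = Step.D :: mesa h rest from by rw [mesa]]; simp; omega
  | case6 h => simp [mesa_nil]

lemma mesa_D' (h r) : mesa h (Step.D :: r) = Step.D :: mesa h r := by rw [mesa]

/-- Every lattice point of `mesa h l` is a lattice point of `l`. -/
lemma mesa_prefix (h l) :
    ∀ m, ∃ m', cntX ((mesa h l).take m) = cntX (l.take m') ∧
      cntY ((mesa h l).take m) = cntY (l.take m') := by
  induction h, l using mesa.induct with
  | case1 h rest hpos ih =>
    rw [mesa_ES, if_pos hpos]
    intro m
    match m with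
    | 0 => exact ⟨0, by simp⟩
    | (k+1) =>
      obtain ⟨m', hx, hy⟩ := ih k
      exact ⟨m' + 2, by simp [hx, hy]⟩
  | case2 h rest hpos ih =>
    rw [mesa_ES, if_neg hpos]
    intro m
    match m with
    | 0 => exact ⟨0, by simp⟩
    | (k+1) =>
      obtain ⟨m', hx, hy⟩ := ih k
      exact ⟨m' + 1, by simp [hx, hy]⟩
  | case3 h rest hne ih =>
    rw [mesa_E _ _ hne]
    intro m
    match m with
    | 0 => exact ⟨0, by simp⟩
    | (k+1) =>
      obtain ⟨m', hx, hy⟩ := ih k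
      exact ⟨m' + 1, by simp [hx, hy]⟩
  | case4 h rest ih =>
    rw [mesa_S]
    intro m
    match m with
    | 0 => exact ⟨0, by simp⟩
    | (k+1) =>
      obtain ⟨m', hx, hy⟩ := ih k
      exact ⟨m' + 1, by simp [hx, hy]⟩
  | case5 h rest ih =>
    rw [mesa_D']
    intro m
    match m with
    | 0 => exact ⟨0, by simp⟩
    | (k+1) =>
      obtain ⟨m', hx, hy⟩ := ih k
      exact ⟨m' + 1, by simp [hx, hy]⟩
  | case6 h => intro m; exact ⟨0, by simp [mesa_nil]⟩

/-- Every `D` step of `mesa h l` is tall and comes from an `ES` peak of `l`. -/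
lemma mesa_D_decomp (h l) (hD : Step.D ∉ l)
    (hDy : ∀ m, cntY (l.take m) ≤ h + cntX (l.take m)) :
    ∀ l₁ l₂, mesa h l = l₁ ++ Step.D :: l₂ →
      cntY l₁ < h + cntX l₁ ∧
      ∃ p₁ p₂, l = p₁ ++ Step.E :: Step.S :: p₂ ∧ cntX p₁ = cntX l₁ ∧ cntY p₁ = cntY l₁ := by
  induction h, l using mesa.induct with
  | case1 h rest hpos ih =>
    rw [mesa_ES, if_pos hpos]
    intro l₁ l₂ heq
    match l₁, heq with
    | [], heq =>
      refine ⟨by simpa using hpos, [], rest, by simp, by simp, by simp⟩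
    | (Step.D :: l₁'), heq =>
      have heq' : mesa h rest = l₁' ++ Step.D :: l₂ := by simpa using heq
      have hD' : Step.D ∉ rest := by simp at hD; tauto
      have hDy' : ∀ m, cntY (rest.take m) ≤ h + cntX (rest.take m) := by
        intro m; have := hDy (m + 2); simp at this; omega
      obtain ⟨htall, p₁, p₂, hdec, hx, hy⟩ := ih hD' hDy' l₁' l₂ heq'
      exact ⟨by simp; omega, Step.E :: Step.S :: p₁, p₂, by simp [hdec], by simp [hx], by simp [hy]⟩
  | case2 h rest hpos ih =>
    rw [mesa_ES, if_neg hpos]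
    intro l₁ l₂ heq
    match l₁, heq with
    | (Step.E :: l₁'), heq =>
      have heq' : mesa (h+1) (Step.S :: rest) = l₁' ++ Step.D :: l₂ := by simpa using heq
      have hD' : Step.D ∉ Step.S :: rest := by simp at hD ⊢; tauto
      have hDy' : ∀ m, cntY ((Step.S :: rest).take m) ≤ (h+1) + cntX ((Step.S :: rest).take m) := by
        intro m; have := hDy (m + 1); simp at this ⊢
        match m with
        | 0 => simp
        | (k+1) => simp at this ⊢; omega
      obtain ⟨htall, p₁, p₂, hdec, hx, hy⟩ := ih hD' hDy' l₁' l₂ heq'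
      exact ⟨by simp; omega, Step.E :: p₁, p₂, by simp [hdec], by simp [hx], by simp [hy]⟩
  | case3 h rest hne ih =>
    rw [mesa_E _ _ hne]
    intro l₁ l₂ heq
    match l₁, heq with
    | (Step.E :: l₁'), heq =>
      have heq' : mesa (h+1) rest = l₁' ++ Step.D :: l₂ := by simpa using heq
      have hD' : Step.D ∉ rest := by simp at hD; tauto
      have hDy' : ∀ m, cntY (rest.take m) ≤ (h+1) + cntX (rest.take m) := by
        intro m; have := hDy (m + 1); simp at this; omega
      obtain ⟨htall, p₁, p₂, hdec, hx, hy⟩ := ih hD' hDy' l₁' l₂ heq'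
      exact ⟨by simp; omega, Step.E :: p₁, p₂, by simp [hdec], by simp [hx], by simp [hy]⟩
  | case4 h rest ih =>
    rw [mesa_S]
    intro l₁ l₂ heq
    match l₁, heq with
    | (Step.S :: l₁'), heq =>
      have heq' : mesa (h-1) rest = l₁' ++ Step.D :: l₂ := by simpa using heq
      have hD' : Step.D ∉ rest := by simp at hD; tauto
      have h1 : 1 ≤ h := by have := hDy 1; simpa using this
      have hDy' : ∀ m, cntY (rest.take m) ≤ (h-1) + cntX (rest.take m) := by
        intro m; have := hDy (m + 1); simp at this; omega
      obtain ⟨htall, p₁, p₂, hdec, hx, hy⟩ := ih hD' hDy' l₁' l₂ heq'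
      exact ⟨by simp; omega, Step.S :: p₁, p₂, by simp [hdec], by simp [hx], by simp [hy]⟩
  | case5 h rest ih => exact absurd (by simp : Step.D ∈ Step.D :: rest) hD
  | case6 h => intro l₁ l₂ heq; rw [mesa_nil] at heq; exact absurd heq (by simp)

/-- Every lattice point of `l` is either weakly dominated by a point of `mesa h l`,
or is the apex of a replaced tall peak. -/
lemma mesa_cover (h l) (hD : Step.D ∉ l) :
    ∀ m, (∃ m', cntX (l.take m) ≤ cntX ((mesa h l).take m') ∧
            cntY ((mesa h l).take m') ≤ cntY (l.take m)) ∨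
         (∃ l₁ l₂, mesa h l = l₁ ++ Step.D :: l₂ ∧
            cntX l₁ + 1 = cntX (l.take m) ∧ cntY l₁ = cntY (l.take m)) := by
  induction h, l using mesa.induct with
  | case1 h rest hpos ih =>
    have hD' : Step.D ∉ rest := by simp at hD; tauto
    rw [mesa_ES, if_pos hpos]
    intro m
    match m with
    | 0 => exact Or.inl ⟨0, by simp⟩
    | 1 => exact Or.inr ⟨[], mesa h rest, by simp, by simp, by simp⟩
    | (k+2) =>
      rcases ih hD' k with ⟨m', h1, h2⟩ | ⟨l₁, l₂, heq, hx, hy⟩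
      · exact Or.inl ⟨m' + 1, by simp; omega⟩
      · exact Or.inr ⟨Step.D :: l₁, l₂, by simp [heq], by simp; omega, by simp; omega⟩
  | case2 h rest hpos ih =>
    have hD' : Step.D ∉ Step.S :: rest := by simp at hD ⊢; tauto
    rw [mesa_ES, if_neg hpos]
    intro m
    match m with
    | 0 => exact Or.inl ⟨0, by simp⟩
    | (k+1) =>
      rcases ih hD' k with ⟨m', h1, h2⟩ | ⟨l₁, l₂, heq, hx, hy⟩
      · exact Or.inl ⟨m' + 1, by simp; omega⟩
      · exact Or.inr ⟨Step.E :: l₁, l₂, by simp [heq], by simp; omega, by simp; omega⟩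
  | case3 h rest hne ih =>
    have hD' : Step.D ∉ rest := by simp at hD; tauto
    rw [mesa_E _ _ hne]
    intro m
    match m with
    | 0 => exact Or.inl ⟨0, by simp⟩
    | (k+1) =>
      rcases ih hD' k with ⟨m', h1, h2⟩ | ⟨l₁, l₂, heq, hx, hy⟩
      · exact Or.inl ⟨m' + 1, by simp; omega⟩
      · exact Or.inr ⟨Step.E :: l₁, l₂, by simp [heq], by simp; omega, by simp; omega⟩
  | case4 h rest ih =>
    have hD' : Step.D ∉ rest := by simp at hD; tauto
    rw [mesa_S]
    intro m
    match m with
    | 0 => exact Or.inl ⟨0, by simp⟩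
    | (k+1) =>
      rcases ih hD' k with ⟨m', h1, h2⟩ | ⟨l₁, l₂, heq, hx, hy⟩
      · exact Or.inl ⟨m' + 1, by simp; omega⟩
      · exact Or.inr ⟨Step.S :: l₁, l₂, by simp [heq], by simp; omega, by simp; omega⟩
  | case5 h rest ih => exact absurd (by simp : Step.D ∈ Step.D :: rest) hD
  | case6 h => intro m; exact Or.inl ⟨0, by simp [mesa_nil]⟩

/-- A tall `ES` peak of `l` becomes a `D` step of `mesa h l`. -/
lemma peak_to_D (h l) (hD : Step.D ∉ l) :
    ∀ p₁ p₂, l = p₁ ++ Step.E :: Step.S :: p₂ → cntY p₁ < h + cntX p₁ →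
      ∃ l₁ l₂, mesa h l = l₁ ++ Step.D :: l₂ ∧ cntX l₁ = cntX p₁ ∧ cntY l₁ = cntY p₁ := by
  induction h, l using mesa.induct with
  | case1 h rest hpos ih =>
    have hD' : Step.D ∉ rest := by simp at hD; tauto
    rw [mesa_ES, if_pos hpos]
    intro p₁ p₂ hdec htall
    match p₁, hdec with
    | [], hdec => exact ⟨[], mesa h rest, by simp, by simp, by simp⟩
    | (Step.E :: Step.S :: q), hdec =>
      have hdec' : rest = q ++ Step.E :: Step.S :: p₂ := by simpa using hdec
      have htall' : cntY q < h + cntX q := by simp at htall; omega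
      obtain ⟨l₁, l₂, heq, hx, hy⟩ := ih hD' q p₂ hdec' htall'
      exact ⟨Step.D :: l₁, l₂, by simp [heq], by simp [hx], by simp [hy]⟩
  | case2 h rest hpos ih =>
    have hD' : Step.D ∉ Step.S :: rest := by simp at hD ⊢; tauto
    rw [mesa_ES, if_neg hpos]
    intro p₁ p₂ hdec htall
    match p₁, hdec with
    | [], hdec => simp at htall; omega
    | (Step.E :: q), hdec =>
      have hdec' : Step.S :: rest = q ++ Step.E :: Step.S :: p₂ := by simpa using hdec
      have htall' : cntY q < (h + 1) + cntX q := by simp at htall; omega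
      obtain ⟨l₁, l₂, heq, hx, hy⟩ := ih hD' q p₂ hdec' htall'
      exact ⟨Step.E :: l₁, l₂, by simp [heq], by simp [hx], by simp [hy]⟩
  | case3 h rest hne ih =>
    have hD' : Step.D ∉ rest := by simp at hD; tauto
    rw [mesa_E _ _ hne]
    intro p₁ p₂ hdec htall
    match p₁, hdec with
    | [], hdec => exact absurd (by simpa using hdec) (by intro hh; exact hne _ hh)
    | (Step.E :: q), hdec =>
      have hdec' : rest = q ++ Step.E :: Step.S :: p₂ := by simpa using hdec
      have htall' : cntY q < (h + 1) + cntX q := by simp at htall; omega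
      obtain ⟨l₁, l₂, heq, hx, hy⟩ := ih hD' q p₂ hdec' htall'
      exact ⟨Step.E :: l₁, l₂, by simp [heq], by simp [hx], by simp [hy]⟩
  | case4 h rest ih =>
    have hD' : Step.D ∉ rest := by simp at hD; tauto
    rw [mesa_S]
    intro p₁ p₂ hdec htall
    match p₁, hdec with
    | (Step.S :: q), hdec =>
      have hdec' : rest = q ++ Step.E :: Step.S :: p₂ := by simpa using hdec
      have htall' : cntY q < (h - 1) + cntX q := by simp at htall; omega
      obtain ⟨l₁, l₂, heq, hx, hy⟩ := ih hD' q p₂ hdec' htall'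
      exact ⟨Step.S :: l₁, l₂, by simp [heq], by simp [hx], by simp [hy]⟩
  | case5 h rest ih => exact absurd (by simp : Step.D ∈ Step.D :: rest) hD
  | case6 h => intro p₁ p₂ hdec _; exact absurd hdec (by simp)

/-- If `{i,j}` is in the area of `l` but neither `{i,j+1}` nor `{i-1,j}` is,
then `l` has an `ES` peak with apex `(j, i-1)`. -/
lemma findPeak : ∀ l : List Step, Step.D ∉ l → ∀ i j : ℕ, 1 ≤ i → 1 ≤ j → i ≤ cntY l →
    (∃ m, j ≤ cntX (l.take m) ∧ cntY (l.take m) < i) →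
    (∀ m, j + 1 ≤ cntX (l.take m) → i ≤ cntY (l.take m)) →
    (∀ m, j ≤ cntX (l.take m) → i - 1 ≤ cntY (l.take m)) →
    ∃ p₁ p₂, l = p₁ ++ Step.E :: Step.S :: p₂ ∧ cntX p₁ + 1 = j ∧ cntY p₁ + 1 = i := by
  intro l
  induction l with
  | nil =>
    rintro _ i j hi hj _ ⟨m, hm1, hm2⟩ _ _
    simp at hm1; omega
  | cons a t ih =>
    intro hD i j hi hj hcnt hwit h2 h3
    have hDt : Step.D ∉ t := by simp at hD; tauto
    match a with
    | Step.D => exact absurd (by simp) hD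
    | Step.S =>
      obtain ⟨m, hm1, hm2⟩ := hwit
      match m, hm1, hm2 with
      | 0, hm1, hm2 => simp at hm1; omega
      | (k+1), hm1, hm2 =>
        simp at hm1 hm2 hcnt
        have hi2 : 2 ≤ i := by omega
        obtain ⟨p₁, p₂, hdec, hx, hy⟩ := ih hDt (i-1) j (by omega) hj (by omega)
          ⟨k, hm1, by omega⟩
          (fun m hm => by have := h2 (m+1) (by simpa using hm); simp at this; omega)
          (fun m hm => by have := h3 (m+1) (by simpa using hm); simp at this; omega)
        exact ⟨Step.S :: p₁, p₂, by simp [hdec], by simp [hx], by simp; omega⟩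
    | Step.E =>
      rcases Nat.lt_or_ge 1 j with hj2 | hj1
      · -- j ≥ 2 : recurse
        obtain ⟨m, hm1, hm2⟩ := hwit
        match m, hm1, hm2 with
        | 0, hm1, hm2 => simp at hm1; omega
        | (k+1), hm1, hm2 =>
          simp at hm1 hm2 hcnt
          obtain ⟨p₁, p₂, hdec, hx, hy⟩ := ih hDt i (j-1) hi (by omega) hcnt
            ⟨k, by omega, hm2⟩
            (fun m hm => by have := h2 (m+1) (by simp; omega); simpa using this)
            (fun m hm => by have := h3 (m+1) (by simp; omega); simpa using this)
          exact ⟨Step.E :: p₁, p₂, by simp [hdec], by simp; omega, by simp [hy]⟩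
      · -- j = 1 : the peak is at the front
        have hj1' : j = 1 := by omega
        have hi1 : i = 1 := by
          have := h3 1 (by simp; omega); simp at this; omega
        subst hj1' hi1
        match t with
        | [] => simp at hcnt
        | Step.S :: t' => exact ⟨[], t', by simp, by simp, by simp⟩
        | Step.E :: t' =>
          have := h2 2 (by simp); simp at this
        | Step.D :: t' => exact absurd (by simp) hD


lemma mem_AreaF_iff {n : ℕ} (σ : List Step) (i j : Fin n) (hij : (i : ℕ) < (j : ℕ)) :
    s(i, j) ∈ AreaF n σ ↔ AreaPred σ ((i : ℕ) + 1) ((j : ℕ) + 1) := by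
  simp only [AreaF, Finset.mem_filter, Finset.mem_univ, true_and]
  constructor
  · rintro ⟨i', j', heq, hij', hp⟩
    rw [Sym2.eq_iff] at heq
    rcases heq with ⟨h1, h2⟩ | ⟨h1, h2⟩
    · subst h1; subst h2; exact hp
    · subst h1; subst h2; omega
  · intro hp; exact ⟨i, j, rfl, hij, hp⟩

lemma mem_DiagF_iff {n : ℕ} (σ : List Step) (i j : Fin n) (hij : (i : ℕ) < (j : ℕ)) :
    s(i, j) ∈ DiagF n σ ↔ DiagPred σ ((i : ℕ) + 1) ((j : ℕ) + 1) := by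
  simp only [DiagF, Finset.mem_filter, Finset.mem_univ, true_and]
  constructor
  · rintro ⟨i', j', heq, hij', hp⟩
    rw [Sym2.eq_iff] at heq
    rcases heq with ⟨h1, h2⟩ | ⟨h1, h2⟩
    · subst h1; subst h2; exact hp
    · subst h1; subst h2; omega
  · intro hp; exact ⟨i, j, rfl, hij, hp⟩

/-- For a Dyck path `π`, `Mesa(π)` is a tall Schröder path,
`Area(π) = Area(Mesa(π)) ∪ Diag(Mesa(π))`, and the only indifference graph `γ` with
`Diag(Mesa(π)) ⊆ E(γ) ⊆ Area(π)` is `Graph(π)` itself. -/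
theorem mesa_area_and_unique_indiff (n : ℕ) (π : List Step)
    (hπ : IsSchroeder n π ∧ Step.D ∉ π) :
    IsTallSchroeder n (mesa 0 π) ∧
    AreaF n π = AreaF n (mesa 0 π) ∪ DiagF n (mesa 0 π) ∧
    ∀ E : Finset (Sym2 (Fin n)), IndiffEdges n E →
      DiagF n (mesa 0 π) ⊆ E → E ⊆ AreaF n π → E = AreaF n π := by
  obtain ⟨⟨hX, hY, hDyck⟩, hnoD⟩ := hπ
  have hDy0 : ∀ m, cntY (π.take m) ≤ 0 + cntX (π.take m) := fun m => by simpa using hDyck m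
  have part1 : IsTallSchroeder n (mesa 0 π) := by
    refine ⟨⟨by rw [(mesa_cnt 0 π).1, hX], by rw [(mesa_cnt 0 π).2, hY], ?_⟩, ?_⟩
    · intro m
      obtain ⟨m', hx, hy⟩ := mesa_prefix 0 π m
      rw [hx, hy]; exact hDyck m'
    · intro l₁ l₂ heq
      have := (mesa_D_decomp 0 π hnoD hDy0 l₁ l₂ heq).1
      omega
  have part2 : AreaF n π = AreaF n (mesa 0 π) ∪ DiagF n (mesa 0 π) := by
    ext e
    simp only [Finset.mem_union]
    constructor
    · intro he
      obtain ⟨i, j, rfl, hij, hp⟩ := (Finset.mem_filter.mp he).2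
      obtain ⟨m, hm1, hm2⟩ := hp
      rcases mesa_cover 0 π hnoD m with ⟨m', h1, h2⟩ | ⟨l₁, l₂, heq, hx, hy⟩
      · exact Or.inl ((mem_AreaF_iff _ i j hij).mpr ⟨m', by omega, by omega⟩)
      · have ht1 : (mesa 0 π).take l₁.length = l₁ := by
          rw [heq]; exact List.take_left
        have ht2 : (mesa 0 π).take (l₁.length + 1) = l₁ ++ [Step.D] := by
          rw [heq, List.take_length_add_append]; rfl
        rcases Nat.lt_or_ge (cntX l₁) ((j : ℕ) + 1) with hc1 | hc1
        · rcases Nat.lt_or_ge (cntY l₁) (i : ℕ) with hc2 | hc2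
          · refine Or.inl ((mem_AreaF_iff _ i j hij).mpr ⟨l₁.length + 1, ?_, ?_⟩) <;>
              rw [ht2] <;> simp <;> omega
          · exact Or.inr ((mem_DiagF_iff _ i j hij).mpr ⟨l₁, l₂, heq, by omega, by omega⟩)
        · refine Or.inl ((mem_AreaF_iff _ i j hij).mpr ⟨l₁.length, ?_, ?_⟩) <;>
            rw [ht1] <;> omega
    · rintro (he | he)
      · obtain ⟨i, j, rfl, hij, hp⟩ := (Finset.mem_filter.mp he).2
        obtain ⟨m, h1, h2⟩ := hp
        obtain ⟨m', hx, hy⟩ := mesa_prefix 0 π m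
        exact (mem_AreaF_iff _ i j hij).mpr ⟨m', by omega, by omega⟩
      · obtain ⟨i, j, rfl, hij, hp⟩ := (Finset.mem_filter.mp he).2
        obtain ⟨l₁, l₂, heq, hx, hy⟩ := hp
        obtain ⟨-, p₁, p₂, hdec, px, py⟩ := mesa_D_decomp 0 π hnoD hDy0 l₁ l₂ heq
        refine (mem_AreaF_iff _ i j hij).mpr ⟨p₁.length + 1, ?_, ?_⟩ <;>
          · rw [hdec, List.take_length_add_append]
            simp
            omega
  refine ⟨part1, part2, ?_⟩
  intro E hind hDsub hEsub
  have key : ∀ k : ℕ, ∀ i j : Fin n, (i : ℕ) < (j : ℕ) → n - ((j : ℕ) - (i : ℕ)) ≤ k →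
      s(i, j) ∈ AreaF n π → s(i, j) ∈ E := by
    intro k
    induction k with
    | zero =>
      intro i j hij hk _
      have := j.isLt
      omega
    | succ k ih =>
      intro i j hij hk hmem
      have hA : AreaPred π ((i : ℕ) + 1) ((j : ℕ) + 1) := (mem_AreaF_iff _ i j hij).mp hmem
      by_cases h1 : AreaPred π ((i : ℕ) + 1) ((j : ℕ) + 2)
      · obtain ⟨m, hm1, hm2⟩ := h1
        have hle := cntX_take_le π m
        have hjn : (j : ℕ) + 1 < n := by omega
        have hmem' : s(i, (⟨(j : ℕ) + 1, hjn⟩ : Fin n)) ∈ AreaF n π :=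
          (mem_AreaF_iff π i ⟨(j : ℕ) + 1, hjn⟩ (by (try simp only [Fin.lt_def, Fin.le_def, Fin.val_mk]); omega)).mpr ⟨m, by (try simp only [Fin.lt_def, Fin.le_def, Fin.val_mk]); omega, by (try simp only [Fin.lt_def, Fin.le_def, Fin.val_mk]); omega⟩
        have hEmem := ih i ⟨(j : ℕ) + 1, hjn⟩ (by (try simp only [Fin.lt_def, Fin.le_def, Fin.val_mk]); omega) (by (try simp only [Fin.lt_def, Fin.le_def, Fin.val_mk]); omega) hmem'
        exact hind.2 i ⟨(j : ℕ) + 1, hjn⟩ i j (by (try simp only [Fin.lt_def, Fin.le_def, Fin.val_mk]); omega) hEmem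
          (le_refl i) (by (try simp only [Fin.lt_def, Fin.le_def, Fin.val_mk]); omega) (by (try simp only [Fin.lt_def, Fin.le_def, Fin.val_mk]); omega)
      · by_cases h2 : AreaPred π (i : ℕ) ((j : ℕ) + 1)
        · obtain ⟨m, hm1, hm2⟩ := h2
          have hi1 : 1 ≤ (i : ℕ) := by omega
          have hin : (i : ℕ) - 1 < n := by have := i.isLt; omega
          have hmem' : s((⟨(i : ℕ) - 1, hin⟩ : Fin n), j) ∈ AreaF n π :=
            (mem_AreaF_iff π ⟨(i : ℕ) - 1, hin⟩ j (by (try simp only [Fin.lt_def, Fin.le_def, Fin.val_mk]); omega)).mpr ⟨m, by (try simp only [Fin.lt_def, Fin.le_def, Fin.val_mk]); omega, by (try simp only [Fin.lt_def, Fin.le_def, Fin.val_mk]); omega⟩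
          have hEmem := ih ⟨(i : ℕ) - 1, hin⟩ j (by (try simp only [Fin.lt_def, Fin.le_def, Fin.val_mk]); omega) (by (try simp only [Fin.lt_def, Fin.le_def, Fin.val_mk]); omega) hmem'
          exact hind.2 ⟨(i : ℕ) - 1, hin⟩ j i j (by (try simp only [Fin.lt_def, Fin.le_def, Fin.val_mk]); omega) hEmem
            (by (try simp only [Fin.lt_def, Fin.le_def, Fin.val_mk]); omega) (by (try simp only [Fin.lt_def, Fin.le_def, Fin.val_mk]); omega) (le_refl j)
        · simp only [AreaPred, not_exists, not_and, not_lt] at h1 h2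
          obtain ⟨p₁, p₂, hdec, hx, hy⟩ := findPeak π hnoD ((i : ℕ) + 1) ((j : ℕ) + 1)
            (by omega) (by omega) (by rw [hY]; have := i.isLt; omega) hA
            (fun m hm => h1 m (by omega))
            (fun m hm => by have := h2 m hm; omega)
          obtain ⟨l₁, l₂, heq, lx, ly⟩ := peak_to_D 0 π hnoD p₁ p₂ hdec (by omega)
          exact hDsub ((mem_DiagF_iff _ i j hij).mpr ⟨l₁, l₂, heq, by omega, by omega⟩)
  refine Finset.Subset.antisymm hEsub ?_
  intro e he
  obtain ⟨i, j, rfl, hij, hp⟩ := (Finset.mem_filter.mp he).2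
  exact key n i j hij (Nat.sub_le _ _) he
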